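/- If G is a direct sum of cm-slender groups, i.e., G = ⊕_{i∈I} G_i with each G_i cm-slender, then G is cm-slender. -/

import Mathlib

universe u

/-- A group `G` is cm-slender if every group homomorphism from a completely
metrizable topological group to `G` has open kernel. -/
def IsCMSlender (G : Type*) [Group G] : Prop :=
  ∀ (H : Type u) [Group H] [tH : TopologicalSpace H] [IsTopologicalGroup H],
    (∃ mH : MetricSpace H,
      mH.toUniformSpace.toTopologicalSpace = tH ∧ @CompleteSpace H mH.toUniformSpace) →
    ∀ φ : H →* G, IsOpen ((φ : H → G) ⁻¹' {1})

/-- The direct sum (restricted direct product) `⊕_{i ∈ I} G i` of groups, as the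
subgroup of the product consisting of elements with finite support. -/
def directSumSubgroup {I : Type*} (G : I → Type*) [∀ i, Group (G i)] :
    Subgroup (∀ i, G i) where
  carrier := {f | {i : I | f i ≠ 1}.Finite}
  one_mem' := by
    simp
  mul_mem' := by
    intro a b ha hb
    refine (ha.union hb).subset ?_
    intro i hi
    simp only [Set.mem_setOf_eq, Pi.mul_apply] at hi
    by_contra hc
    simp only [Set.mem_union, Set.mem_setOf_eq, not_or, not_not] at hc
    rw [hc.1, hc.2, one_mul] at hi
    exact hi rfl
  inv_mem' := by
    intro a ha
    refine ha.subset ?_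
    intro i hi
    simp only [Set.mem_setOf_eq, Pi.inv_apply] at hi
    simp only [Set.mem_setOf_eq]
    intro hc
    rw [hc] at hi
    exact hi inv_one


lemma key_openInter {I : Type*} {H : Type*} [Group H] [MetricSpace H]
    [IsTopologicalGroup H] [CompleteSpace H] (K : I → Subgroup H)
    (hK : ∀ i, IsOpen (K i : Set H)) (hfin : ∀ x : H, {i | x ∉ K i}.Finite) :
    IsOpen (⋂ i, (K i : Set H)) := by
  by_contra hno
  classical
  -- Step A: every open neighborhood of 1 escapes all but finitely many K's
  have stepA : ∀ (U : Set H), IsOpen U → (1:H) ∈ U → ∀ F : Finset I,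
      ∃ g ∈ U, ∃ j, j ∉ F ∧ g ∉ K j := by
    intro U hUo hU1 F
    by_contra hcon
    push_neg at hcon
    apply hno
    have hmem : (⋂ i, (K i : Set H)) ∈ nhds (1:H) := by
      have hVo : IsOpen (U ∩ ⋂ i ∈ F, (K i : Set H)) :=
        hUo.inter (isOpen_biInter_finset (fun i _ => hK i))
      have hV1 : (1:H) ∈ U ∩ ⋂ i ∈ F, (K i : Set H) :=
        ⟨hU1, by simp only [Set.mem_iInter, SetLike.mem_coe]; exact fun i _ => one_mem _⟩
      refine Filter.mem_of_superset (hVo.mem_nhds hV1) ?_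
      rintro x ⟨hxU, hxF⟩
      simp only [Set.mem_iInter, SetLike.mem_coe] at hxF ⊢
      intro i
      by_cases hiF : i ∈ F
      · exact hxF i hiF
      · exact hcon x hxU i hiF
    have h2 : IsOpen ((⨅ i, K i : Subgroup H) : Set H) :=
      Subgroup.isOpen_of_mem_nhds _ (by rwa [Subgroup.coe_iInf])
    rwa [Subgroup.coe_iInf] at h2
  -- one-step transition
  have trans : ∀ (n : ℕ) (p : H) (F : Finset I), ∃ q : H × Finset I, ∃ g j,
      q.1 = p * g ∧ q.2 = insert j F ∧ dist (p * g) p < (1/2:ℝ)^n ∧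
      (∀ i ∈ F, g ∈ K i) ∧ j ∉ F ∧ p ∈ K j ∧ g ∉ K j := by
    intro n p F
    set S : Finset I := (hfin p).toFinset ∪ F with hS
    have hUo : IsOpen ({x : H | dist (p*x) p < (1/2:ℝ)^n} ∩ ⋂ i ∈ S, (K i : Set H)) := by
      refine IsOpen.inter ?_ (isOpen_biInter_finset fun i _ => hK i)
      exact isOpen_lt ((continuous_const.mul continuous_id).dist continuous_const)
        continuous_const
    have hU1 : (1:H) ∈ ({x : H | dist (p*x) p < (1/2:ℝ)^n} ∩ ⋂ i ∈ S, (K i : Set H)) := by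
      constructor
      · simp only [Set.mem_setOf_eq, mul_one, dist_self]
        positivity
      · simp only [Set.mem_iInter, SetLike.mem_coe]; exact fun i _ => one_mem _
    obtain ⟨g, hgU, j, hjS, hgK⟩ := stepA _ hUo hU1 S
    have hgS : ∀ i ∈ S, g ∈ K i := by
      have := hgU.2
      simp only [Set.mem_iInter, SetLike.mem_coe] at this
      exact this
    refine ⟨(p*g, insert j F), g, j, rfl, rfl, hgU.1, ?_, ?_, ?_, hgK⟩
    · intro i hiF; exact hgS i (Finset.mem_union_right _ hiF)
    · exact fun hjF => hjS (Finset.mem_union_right _ hjF)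
    · by_contra hp
      exact hjS (Finset.mem_union_left _ ((hfin p).mem_toFinset.2 hp))
  choose step hstep using trans
  let s : ℕ → H × Finset I := fun n =>
    Nat.rec ((1:H), (∅ : Finset I)) (fun m ih => step m ih.1 ih.2) n
  have H1 : ∀ n, ∃ g j, (s (n+1)).1 = (s n).1 * g ∧ (s (n+1)).2 = insert j (s n).2 ∧
      dist ((s n).1 * g) ((s n).1) < (1/2:ℝ)^n ∧ (∀ i ∈ (s n).2, g ∈ K i) ∧
      j ∉ (s n).2 ∧ (s n).1 ∈ K j ∧ g ∉ K j :=
    fun n => hstep n (s n).1 (s n).2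
  choose g j h1 h2 h3 h4 h5 h6 h7 using H1
  -- monotonicity of the finsets
  have hmono : ∀ a b : ℕ, a ≤ b → (s a).2 ⊆ (s b).2 := by
    intro a b hab
    induction b, hab using Nat.le_induction with
    | base => exact fun x hx => hx
    | succ b hab ih =>
      intro x hx
      rw [h2 b]
      exact Finset.mem_insert_of_mem (ih hx)
  have hj_mem : ∀ n, j n ∈ (s (n+1)).2 := fun n => by
    rw [h2 n]; exact Finset.mem_insert_self _ _
  -- Cauchy
  have hcau : CauchySeq (fun n => (s n).1) := by
    refine cauchySeq_of_le_geometric (1/2) 1 (by norm_num) (fun n => ?_)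
    rw [dist_comm, h1 n, one_mul]
    exact le_of_lt (h3 n)
  obtain ⟨y, hy⟩ := cauchySeq_tendsto_of_complete hcau
  -- coset stability
  have hcoset : ∀ n m, n + 1 ≤ m → ((s (n+1)).1)⁻¹ * (s m).1 ∈ K (j n) := by
    intro n m hm
    induction m, hm using Nat.le_induction with
    | base => rw [inv_mul_cancel]; exact one_mem _
    | succ m hm ih =>
      rw [h1 m, ← mul_assoc]
      exact mul_mem ih (h4 m (j n) (hmono (n+1) m hm (hj_mem n)))
  have hylim : ∀ n, ((s (n+1)).1)⁻¹ * y ∈ K (j n) := by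
    intro n
    have hcl : IsClosed {x : H | ((s (n+1)).1)⁻¹ * x ∈ K (j n)} :=
      IsClosed.preimage (continuous_const.mul continuous_id)
        ((K (j n)).isClosed_of_isOpen (hK _))
    exact hcl.mem_of_tendsto hy
      (Filter.eventually_atTop.2 ⟨n+1, fun m hm => hcoset n m hm⟩)
  -- y is not in K (j n) for any n
  have hyK : ∀ n, y ∉ K (j n) := by
    intro n hyk
    have hinv : ((s (n+1)).1)⁻¹ ∈ K (j n) := by
      have := mul_mem (hylim n) (inv_mem hyk)
      simpa [mul_assoc] using this
    have hp1 : (s (n+1)).1 ∈ K (j n) := (inv_mem_iff).mp hinv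
    rw [h1 n] at hp1
    have : g n ∈ K (j n) := by
      have := mul_mem (inv_mem (h6 n)) hp1
      simpa [← mul_assoc] using this
    exact h7 n this
  -- j is injective
  have hjlt : ∀ a b, a < b → j a ≠ j b := by
    intro a b hab hh
    exact h5 b (hh ▸ hmono (a+1) b hab (hj_mem a))
  have hjinj : Function.Injective j := by
    intro a b hab
    by_contra hne
    rcases Nat.lt_or_ge a b with hlt | hge
    · exact hjlt a b hlt hab
    · exact hjlt b a (lt_of_le_of_ne hge (Ne.symm hne)) hab.symm
  exact (Set.infinite_of_injective_forall_mem hjinj (fun n => hyK n)) (hfin y)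

/-- A direct sum of cm-slender groups is cm-slender. -/
theorem isCMSlender_directSum
    {I : Type*} (G : I → Type*) [∀ i, Group (G i)]
    (h : ∀ i, IsCMSlender.{u} (G i)) :
    IsCMSlender.{u} (directSumSubgroup G) := by
  intro H _ tH _ hmet φ
  obtain ⟨mH, htop, hcomp⟩ := hmet
  subst htop
  letI : MetricSpace H := mH
  letI : CompleteSpace H := hcomp
  set ψ : ∀ i, H →* G i :=
    fun i => (Pi.evalMonoidHom G i).comp ((directSumSubgroup G).subtype.comp φ) with hψ
  set K : I → Subgroup H := fun i => (ψ i).ker with hKdef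
  have hKopen : ∀ i, IsOpen (K i : Set H) := by
    intro i
    have := h i H ⟨mH, rfl, hcomp⟩ (ψ i)
    convert this using 1
    ext x; simp [hKdef, MonoidHom.mem_ker]
  have hfin : ∀ x : H, {i | x ∉ K i}.Finite := by
    intro x
    have hx : {i | ((φ x : ∀ i, G i)) i ≠ 1}.Finite := (φ x).2
    refine hx.subset ?_
    intro i hi
    simp only [Set.mem_setOf_eq, hKdef, MonoidHom.mem_ker, hψ] at hi ⊢
    exact hi
  have heq : ((φ : H → directSumSubgroup G) ⁻¹' {1}) = ⋂ i, (K i : Set H) := by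
    ext x
    simp only [Set.mem_preimage, Set.mem_singleton_iff, Set.mem_iInter, SetLike.mem_coe,
      hKdef, MonoidHom.mem_ker, hψ, MonoidHom.comp_apply, Pi.evalMonoidHom_apply,
      Subgroup.coe_subtype]
    constructor
    · intro hx i; rw [hx]; rfl
    · intro hx
      apply Subtype.ext
      funext i
      exact hx i
  rw [heq]
  exact key_openInter K hKopen hfin
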